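/- arXiv:1710.11250 — 3 statements merged into one kernel-verified Lean document; each statement's English description precedes it below -/
import Mathlib

section
/- There exists a constant C > 0 such that for every directed graph G = (V, E) on n vertices, every set S ⊆ V, and every set of pairs P ⊆ S × V with |P| · |S| ≤ n, there is a reachability preserver of (G, P) with at most C · n edges. -/
/-- `t` is reachable from `s` using edges in `E`. -/
def Reaches {V : Type*} (E : Set (V × V)) (s t : V) : Prop :=
  Relation.ReflTransGen (fun u v => (u, v) ∈ E) s t

namespace RP

open List
open scoped Classical

variable {α : Type*}

/-- last vertex of the walk `s :: l`. -/
def lastV (s : α) (l : List α) : α := l.getLastD s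

/-- consecutive pairs of the walk `s :: l`. -/
def edgesOf : α → List α → List (α × α)
  | _, [] => []
  | s, b :: l => (s, b) :: edgesOf b l

@[simp] lemma lastV_nil (s : α) : lastV s ([] : List α) = s := rfl

@[simp] lemma lastV_cons (s b : α) (l : List α) : lastV s (b :: l) = lastV b l :=
  List.getLastD_cons

@[simp] lemma edgesOf_nil (s : α) : edgesOf s ([] : List α) = [] := rfl

@[simp] lemma edgesOf_cons (s b : α) (l : List α) :
    edgesOf s (b :: l) = (s, b) :: edgesOf b l := rfl

/-- A walk in the edge set `E`, starting at `s`, with remaining vertices `l`. -/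
def Walk (E : Set (α × α)) (s : α) (l : List α) : Prop :=
  ∀ e ∈ edgesOf s l, e ∈ E

lemma snd_mem_of_mem_edgesOf : ∀ {l : List α} {s : α} {e : α × α},
    e ∈ edgesOf s l → e.2 ∈ l := by
  intro l
  induction l with
  | nil => intro s e h; simp [edgesOf] at h
  | cons b t ih =>
    intro s e h
    rcases List.mem_cons.1 h with h | h
    · simp [h]
    · exact List.mem_cons_of_mem _ (ih h)

lemma fst_mem_of_mem_edgesOf : ∀ {l : List α} {s : α} {e : α × α},
    e ∈ edgesOf s l → e.1 ∈ s :: l := by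
  intro l
  induction l with
  | nil => intro s e h; simp [edgesOf] at h
  | cons b t ih =>
    intro s e h
    rcases List.mem_cons.1 h with h | h
    · simp [h]
    · rcases List.mem_cons.1 (ih h) with h' | h'
      · simp [h']
      · exact List.mem_cons_of_mem _ (List.mem_cons_of_mem _ h')

lemma exists_edge_of_mem_tail : ∀ {l : List α} {s v : α}, v ∈ l →
    ∃ x, (x, v) ∈ edgesOf s l := by
  intro l
  induction l with
  | nil => intro s v h; simp at h
  | cons b t ih =>
    intro s v h
    rcases List.mem_cons.1 h with rfl | h
    · exact ⟨s, by simp⟩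
    · rcases ih (s := b) h with ⟨x, hx⟩
      exact ⟨x, List.mem_cons_of_mem _ hx⟩

lemma edgesOf_append : ∀ (l₁ : List α) (s : α) (l₂ : List α),
    edgesOf s (l₁ ++ l₂) = edgesOf s l₁ ++ edgesOf (lastV s l₁) l₂ := by
  intro l₁
  induction l₁ with
  | nil => intro s l₂; simp
  | cons b t ih => intro s l₂; simp [edgesOf, ih b l₂]

lemma lastV_append (s : α) (l₁ l₂ : List α) :
    lastV s (l₁ ++ l₂) = lastV (lastV s l₁) l₂ := by
  induction l₁ generalizing s with
  | nil => simp
  | cons b t ih => simp [ih]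

lemma lastV_mem : ∀ (m : List α) (s : α), lastV s m ∈ s :: m := by
  intro m
  induction m with
  | nil => intro s; simp
  | cons b t ih =>
    intro s
    simpa using List.mem_cons_of_mem s (ih b)

lemma lastV_mem_of_ne_nil {m : List α} (hm : m ≠ []) (s : α) : lastV s m ∈ m := by
  cases m with
  | nil => exact absurd rfl hm
  | cons b t => simpa using lastV_mem t b

/-- Split a walk at a vertex occurring in it. -/
lemma split_at {s v : α} : ∀ {l : List α}, v ∈ s :: l →
    ∃ l₁ l₂, l = l₁ ++ l₂ ∧ lastV s l₁ = v ∧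
      edgesOf s l = edgesOf s l₁ ++ edgesOf v l₂ ∧
      lastV v l₂ = lastV s l ∧ (v :: l₂) <:+ (s :: l) := by
  intro l
  induction l generalizing s with
  | nil =>
    intro hv
    have : v = s := by simpa using hv
    subst this
    exact ⟨[], [], by simp⟩
  | cons b t ih =>
    intro hv
    rcases List.mem_cons.1 hv with rfl | hv'
    · exact ⟨[], b :: t, by simp⟩
    · rcases ih (s := b) hv' with ⟨l₁, l₂, h1, h2, h3, h4, h5⟩
      refine ⟨b :: l₁, l₂, by simp [h1], by simpa using h2, ?_, by simpa [h1] using h4, ?_⟩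
      · rw [h1] at h3 ⊢; simp only [edgesOf_cons]; rw [h3, List.cons_append]
      · exact h5.trans (List.suffix_cons _ _)

/-- In a walk without duplicate vertices, each vertex has a unique entering edge. -/
lemma entry_unique {s : α} {l : List α} (hnd : (s :: l).Nodup) {x x' v : α}
    (h : (x, v) ∈ edgesOf s l) (h' : (x', v) ∈ edgesOf s l) : x = x' := by
  induction l generalizing s with
  | nil => simp [edgesOf] at h
  | cons b t ih =>
    have hnd' : (b :: t).Nodup := hnd.of_cons
    have hbt : b ∉ t := (List.nodup_cons.1 hnd').1
    rcases List.mem_cons.1 h with h1 | h1 <;> rcases List.mem_cons.1 h' with h2 | h2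
    · obtain ⟨hx, -⟩ := Prod.ext_iff.1 h1
      obtain ⟨hx', -⟩ := Prod.ext_iff.1 h2
      exact hx.trans hx'.symm
    · exfalso
      obtain ⟨-, hv⟩ := Prod.ext_iff.1 h1
      have hv2 : v = b := hv
      exact hbt (hv2 ▸ snd_mem_of_mem_edgesOf h2)
    · exfalso
      obtain ⟨-, hv⟩ := Prod.ext_iff.1 h2
      have hv2 : v = b := hv
      exact hbt (hv2 ▸ snd_mem_of_mem_edgesOf h1)
    · exact ih hnd' h1 h2

lemma walk_reaches {E : Set (α × α)} : ∀ {l : List α} {s : α},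
    Walk E s l → Reaches E s (lastV s l) := by
  intro l
  induction l with
  | nil => intro s _; exact Relation.ReflTransGen.refl
  | cons b t ih =>
    intro s hw
    have h1 : (s, b) ∈ E := hw _ (by simp [edgesOf])
    have h2 : Walk E b t := fun e he => hw e (by simp [edgesOf, he])
    rw [lastV_cons]; exact Relation.ReflTransGen.head h1 (ih h2)

lemma reaches_walk {E : Set (α × α)} {s t : α} (h : Reaches E s t) :
    ∃ l, Walk E s l ∧ lastV s l = t := by
  induction h using Relation.ReflTransGen.head_induction_on with
  | refl => exact ⟨[], fun e he => by simp [edgesOf] at he, rfl⟩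
  | head h₁ _ ih =>
    rcases ih with ⟨l, hw, hl⟩
    rename_i a c _
    refine ⟨c :: l, ?_, by simpa using hl⟩
    intro e he
    rcases List.mem_cons.1 he with he | he
    · exact he ▸ h₁
    · exact hw _ he

/-- suffix of a walk starting from an occurrence of `v`. -/
lemma walk_suffix_from {E : Set (α × α)} {v : α} : ∀ {l : List α} {s : α},
    Walk E s l → v ∈ s :: l →
    ∃ l', Walk E v l' ∧ lastV v l' = lastV s l ∧ (v :: l') <:+ (s :: l) := by
  intro l
  induction l with
  | nil =>
    intro s hw hv
    have : v = s := by simpa using hv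
    subst this
    exact ⟨[], hw, rfl, by simp⟩
  | cons b t ih =>
    intro s hw hv
    rcases List.mem_cons.1 hv with rfl | hv'
    · exact ⟨b :: t, hw, rfl, by simp⟩
    · have hwb : Walk E b t := fun e he => hw e (by simp [edgesOf, he])
      rcases ih hwb hv' with ⟨l', h1, h2, h3⟩
      exact ⟨l', h1, by simpa using h2, h3.trans (List.suffix_cons _ _)⟩

/-- every reachability is witnessed by a duplicate-free walk. -/
lemma reaches_nodup_walk {E : Set (α × α)} {s t : α} (h : Reaches E s t) :
    ∃ l, Walk E s l ∧ lastV s l = t ∧ (s :: l).Nodup := by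
  rcases reaches_walk h with ⟨l, hw, hl⟩
  clear h
  induction l generalizing s with
  | nil => exact ⟨[], hw, hl, by simp⟩
  | cons b t' ih =>
    have hwb : Walk E b t' := fun e he => hw e (by simp [edgesOf, he])
    have hsb : (s, b) ∈ E := hw _ (by simp [edgesOf])
    have hlb : lastV b t' = t := by simpa using hl
    rcases ih hwb hlb with ⟨l'', h1, h2, h3⟩
    by_cases hs : s ∈ b :: l''
    · rcases walk_suffix_from h1 hs with ⟨m, hm1, hm2, hm3⟩
      exact ⟨m, hm1, hm2.trans h2, hm3.sublist.nodup h3⟩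
    · refine ⟨b :: l'', ?_, by simpa using h2, by simp [List.nodup_cons, hs, h3]⟩
      intro e he
      rcases List.mem_cons.1 he with rfl | he
      · exact hsb
      · exact h1 _ he

/-- criticality: removing `f` breaks the pair `(x, y)`. -/
def Crit (H : Set (α × α)) (f : α × α) (x y : α) : Prop :=
  Reaches H x y ∧ ¬ Reaches (H \ {f}) x y

lemma crit_mem_edges {H : Set (α × α)} {f : α × α} {x y : α} (hc : Crit H f x y)
    {l : List α} (hw : Walk H x l) (hl : lastV x l = y) : f ∈ edgesOf x l := by
  by_contra hf
  exact hc.2 (hl ▸ walk_reaches (fun e he => ⟨hw e he, by rintro rfl; exact hf he⟩))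

lemma reaches_mono {E F : Set (α × α)} (h : E ⊆ F) {a b : α}
    (hr : Reaches E a b) : Reaches F a b :=
  Relation.ReflTransGen.mono (r := fun u v => (u, v) ∈ E) (fun u v huv => h huv) a b hr

/-- Claim 1: two distinct critical edges with the same head cannot serve
pairs with the same source. -/
lemma claim1 {H : Set (α × α)} {f g : α × α} {a y y' : α}
    (hfg : f ≠ g) (hhead : f.2 = g.2)
    (hf : Crit H f a y) (hg : Crit H g a y') : False := by
  obtain ⟨l, hw, hl, hnd⟩ := reaches_nodup_walk hf.1
  have hfmem : f ∈ edgesOf a l := crit_mem_edges hf hw hl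
  have hfmem' : (f.1, f.2) ∈ edgesOf a l := by rwa [Prod.mk.eta]
  have hgnot : g ∉ edgesOf a l := by
    intro hg'
    have hg'' : (g.1, f.2) ∈ edgesOf a l := by rwa [hhead, Prod.mk.eta]
    have h1 : f.1 = g.1 := entry_unique hnd hfmem' hg''
    exact hfg (Prod.ext h1 hhead)
  have hvl : f.2 ∈ a :: l := List.mem_cons_of_mem _ (snd_mem_of_mem_edgesOf hfmem)
  obtain ⟨l₁, l₂, hl12, hlast, hedges, hlast2, hsuf⟩ := split_at hvl
  have hpre : Reaches (H \ {g}) a f.2 := by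
    have : Walk (H \ {g}) a l₁ := by
      intro e he
      have heH : e ∈ H := hw e (by rw [hedges]; exact List.mem_append_left _ he)
      refine ⟨heH, ?_⟩
      simp only [Set.mem_singleton_iff]
      rintro rfl
      exact hgnot (by rw [hedges]; exact List.mem_append_left _ he)
    simpa [hlast] using walk_reaches this
  obtain ⟨m, hwm, hlm, hndm⟩ := reaches_nodup_walk hg.1
  have hgm : g ∈ edgesOf a m := crit_mem_edges hg hwm hlm
  have hgm' : (g.1, f.2) ∈ edgesOf a m := by rwa [hhead, Prod.mk.eta]
  have hvm : f.2 ∈ a :: m := List.mem_cons_of_mem _ (by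
    have := snd_mem_of_mem_edgesOf hgm
    rwa [← hhead] at this)
  obtain ⟨m₁, m₂, hm12, hmlast, hmedges, hmlast2, hmsuf⟩ := split_at hvm
  have hndm₂ : (f.2 :: m₂).Nodup := hmsuf.sublist.nodup hndm
  have hsufw : Walk (H \ {g}) f.2 m₂ := by
    intro e he
    have heH : e ∈ H := hwm e (by rw [hmedges]; exact List.mem_append_right _ he)
    refine ⟨heH, ?_⟩
    simp only [Set.mem_singleton_iff]
    rintro rfl
    have : e.2 ∈ m₂ := snd_mem_of_mem_edgesOf he
    rw [← hhead] at this
    exact (List.nodup_cons.1 hndm₂).1 this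
  have hsufr : Reaches (H \ {g}) f.2 y' := by
    have := walk_reaches hsufw
    rwa [hmlast2, hlm] at this
  exact hg.2 (hpre.trans hsufr)

/-- the asymmetric core of Claim 2. -/
lemma aux2 {H KS : Set (α × α)} {e₂ f₁ f₂ : α × α} {s t a y₁ y₂ u₁ u₂ : α}
    (hKH : KS ⊆ H) (hke₂ : e₂ ∉ KS)
    (hPK : ∀ u v, Reaches H u v → Reaches H v u → Reaches KS u v)
    (hf₁ : f₁.2 = u₁) (hf₂ : f₂.2 = u₂)
    (ce₂ : Crit H e₂ s t) (cf₁ : Crit H f₁ a y₁) (cf₂ : Crit H f₂ a y₂)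
    (hA : Reaches (H \ {e₂, f₂}) s u₁)
    (hB : Reaches (H \ {f₂}) u₁ u₂)
    (hB' : Reaches (H \ {e₂}) u₂ t) : False := by
  obtain ⟨m, hwm, hlm, hndm⟩ := reaches_nodup_walk cf₁.1
  have hf₁m : f₁ ∈ edgesOf a m := crit_mem_edges cf₁ hwm hlm
  have hu₁m : u₁ ∈ a :: m :=
    List.mem_cons_of_mem _ (hf₁ ▸ snd_mem_of_mem_edgesOf hf₁m)
  obtain ⟨m₁, m₂, hm12, hmlast, hmedges, hmlast2, hmsuf⟩ := split_at hu₁m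
  by_cases hcase : f₂ ∈ edgesOf a m₁
  · -- f₂ occurs on the prefix: then u₂ reaches u₁, giving mutual reachability
    have hwpre : Walk H a m₁ := fun e he =>
      hwm e (by rw [hmedges]; exact List.mem_append_left _ he)
    have hu₂m₁ : u₂ ∈ a :: m₁ :=
      List.mem_cons_of_mem _ (hf₂ ▸ snd_mem_of_mem_edgesOf hcase)
    obtain ⟨m₃, hwm₃, hlm₃, -⟩ := walk_suffix_from hwpre hu₂m₁
    have h21 : Reaches H u₂ u₁ := by
      have := walk_reaches hwm₃
      rwa [hlm₃, hmlast] at this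
    have h12 : Reaches H u₁ u₂ := reaches_mono (Set.diff_subset) hB
    have hk : Reaches KS u₁ u₂ := hPK _ _ h12 h21
    have hsub : KS ⊆ H \ {e₂} := fun e he =>
      ⟨hKH he, by simp only [Set.mem_singleton_iff]; rintro rfl; exact hke₂ he⟩
    have hk' : Reaches (H \ {e₂}) u₁ u₂ := reaches_mono hsub hk
    have hA' : Reaches (H \ {e₂}) s u₁ :=
      reaches_mono (Set.diff_subset_diff_right (by simp)) hA
    exact ce₂.2 ((hA'.trans hk').trans hB')
  · -- f₂ avoids the prefix: reroute the pair of f₂ through u₁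
    have hpre : Reaches (H \ {f₂}) a u₁ := by
      have : Walk (H \ {f₂}) a m₁ := by
        intro e he
        refine ⟨hwm e (by rw [hmedges]; exact List.mem_append_left _ he), ?_⟩
        simp only [Set.mem_singleton_iff]
        rintro rfl
        exact hcase he
      simpa [hmlast] using walk_reaches this
    obtain ⟨w, hww, hlw, hndw⟩ := reaches_nodup_walk cf₂.1
    have hf₂w : f₂ ∈ edgesOf a w := crit_mem_edges cf₂ hww hlw
    have hu₂w : u₂ ∈ a :: w :=
      List.mem_cons_of_mem _ (hf₂ ▸ snd_mem_of_mem_edgesOf hf₂w)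
    obtain ⟨w₁, w₂, hw12, hwlast, hwedges, hwlast2, hwsuf⟩ := split_at hu₂w
    have hndw₂ : (u₂ :: w₂).Nodup := hwsuf.sublist.nodup hndw
    have hsufw : Walk (H \ {f₂}) u₂ w₂ := by
      intro e he
      refine ⟨hww e (by rw [hwedges]; exact List.mem_append_right _ he), ?_⟩
      simp only [Set.mem_singleton_iff]
      rintro rfl
      exact (List.nodup_cons.1 hndw₂).1 (hf₂ ▸ snd_mem_of_mem_edgesOf he)
    have hsufr : Reaches (H \ {f₂}) u₂ y₂ := by
      have := walk_reaches hsufw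
      rwa [hwlast2, hlw] at this
    exact cf₂.2 ((hpre.trans hB).trans hsufr)

/-- Claim 2: impossible configuration of four critical edges. -/
lemma claim2 {H KS : Set (α × α)} {e₁ e₂ f₁ f₂ : α × α} {s t a y₁ y₂ : α}
    (hKH : KS ⊆ H) (hke₁ : e₁ ∉ KS) (hke₂ : e₂ ∉ KS)
    (hPK : ∀ u v, Reaches H u v → Reaches H v u → Reaches KS u v)
    (ce₁ : Crit H e₁ s t) (ce₂ : Crit H e₂ s t)
    (cf₁ : Crit H f₁ a y₁) (cf₂ : Crit H f₂ a y₂)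
    (h11 : f₁.2 = e₁.2) (h22 : f₂.2 = e₂.2)
    (hu : e₁.2 ≠ e₂.2) (hef₁ : e₁ ≠ f₁) (hef₂ : e₂ ≠ f₂) : False := by
  obtain ⟨l, hw, hl, hnd⟩ := reaches_nodup_walk ce₁.1
  have he₁l : e₁ ∈ edgesOf s l := crit_mem_edges ce₁ hw hl
  have he₂l : e₂ ∈ edgesOf s l := crit_mem_edges ce₂ hw hl
  have he₁l' : (e₁.1, e₁.2) ∈ edgesOf s l := by rwa [Prod.mk.eta]
  have he₂l' : (e₂.1, e₂.2) ∈ edgesOf s l := by rwa [Prod.mk.eta]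
  have hf₂not : f₂ ∉ edgesOf s l := by
    intro hmem
    have hmem' : (f₂.1, e₂.2) ∈ edgesOf s l := by rw [← h22, Prod.mk.eta]; exact hmem
    exact hef₂ (Prod.ext (entry_unique hnd he₂l' hmem') h22.symm)
  have hf₁not : f₁ ∉ edgesOf s l := by
    intro hmem
    have hmem' : (f₁.1, e₁.2) ∈ edgesOf s l := by rw [← h11, Prod.mk.eta]; exact hmem
    exact hef₁ (Prod.ext (entry_unique hnd he₁l' hmem') h11.symm)
  have hu₁l : e₁.2 ∈ s :: l := List.mem_cons_of_mem _ (snd_mem_of_mem_edgesOf he₁l)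
  obtain ⟨l₁, l₂, hl12, hlast, hedges, hlast2, hsuf⟩ := split_at hu₁l
  have hndl : (l₁ ++ l₂).Nodup := by
    have := hnd.of_cons; rwa [hl12] at this
  have hdisj : l₁.Disjoint l₂ := fun x h1 h2 => (List.nodup_append.1 hndl).2.2 x h1 x h2 rfl
  have hu₂l : e₂.2 ∈ s :: l := List.mem_cons_of_mem _ (snd_mem_of_mem_edgesOf he₂l)
  have hndsuf : (e₁.2 :: l₂).Nodup := hsuf.sublist.nodup hnd
  have hcases : e₂.2 ∈ s :: l₁ ∨ e₂.2 ∈ l₂ := by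
    rw [hl12] at hu₂l
    rcases List.mem_cons.1 hu₂l with h | h
    · exact Or.inl (by simp [h])
    · rcases List.mem_append.1 h with h | h
      · exact Or.inl (List.mem_cons_of_mem _ h)
      · exact Or.inr h
  rcases hcases with hu₂pos | hu₂pos
  · -- e₂.2 comes before e₁.2 on the walk
    have hndpre : (s :: l₁).Nodup := by
      have hpre : (s :: l₁) <+: (s :: l) := ⟨l₂, by simp [hl12]⟩
      exact hpre.sublist.nodup hnd
    have hwpre : Walk H s l₁ := fun e he =>
      hw e (by rw [hedges]; exact List.mem_append_left _ he)
    obtain ⟨a₁, a₂, ha12, halast, haedges, halast2, hasuf⟩ := split_at hu₂pos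
    have hndl₁ : (a₁ ++ a₂).Nodup := by
      have := hndpre.of_cons; rwa [ha12] at this
    have hadisj : a₁.Disjoint a₂ := fun x h1 h2 => (List.nodup_append.1 hndl₁).2.2 x h1 x h2 rfl
    have ha₂ne : a₂ ≠ [] := by
      rintro rfl
      apply hu
      rw [← hlast, ha12]
      simpa [lastV_append] using halast
    have he₁a₁ : e₁ ∉ edgesOf s a₁ := by
      intro hmem
      have h1 : e₁.2 ∈ a₁ := snd_mem_of_mem_edgesOf hmem
      have h2 : e₁.2 ∈ a₂ := by
        have : lastV e₂.2 a₂ = e₁.2 := by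
          rw [← hlast, ha12, lastV_append, halast]
        exact this ▸ lastV_mem_of_ne_nil ha₂ne e₂.2
      exact hadisj h1 h2
    have hA : Reaches (H \ {e₁, f₁}) s e₂.2 := by
      have : Walk (H \ {e₁, f₁}) s a₁ := by
        intro e he
        have heH : e ∈ H := hwpre e (by rw [haedges]; exact List.mem_append_left _ he)
        refine ⟨heH, ?_⟩
        intro hmem
        rcases hmem with rfl | hmem
        · exact he₁a₁ he
        · simp only [Set.mem_singleton_iff] at hmem
          subst hmem
          exact hf₁not (by
            rw [hedges]
            exact List.mem_append_left _ (by rw [haedges]; exact List.mem_append_left _ he))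
      simpa [halast] using walk_reaches this
    have hB : Reaches (H \ {f₁}) e₂.2 e₁.2 := by
      have : Walk (H \ {f₁}) e₂.2 a₂ := by
        intro e he
        have heW : e ∈ edgesOf s l₁ := by rw [haedges]; exact List.mem_append_right _ he
        refine ⟨hwpre e heW, ?_⟩
        simp only [Set.mem_singleton_iff]
        rintro rfl
        exact hf₁not (by rw [hedges]; exact List.mem_append_left _ heW)
      have := walk_reaches this
      rwa [show lastV e₂.2 a₂ = e₁.2 by rw [← hlast, ha12, lastV_append, halast]] at this
    have hB' : Reaches (H \ {e₁}) e₁.2 t := by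
      have : Walk (H \ {e₁}) e₁.2 l₂ := by
        intro e he
        refine ⟨hw e (by rw [hedges]; exact List.mem_append_right _ he), ?_⟩
        simp only [Set.mem_singleton_iff]
        rintro rfl
        exact (List.nodup_cons.1 hndsuf).1 (snd_mem_of_mem_edgesOf he)
      have := walk_reaches this
      rwa [hlast2, hl] at this
    exact aux2 hKH hke₁ hPK h22 h11 ce₁ cf₂ cf₁ hA hB hB'
  · -- e₁.2 comes before e₂.2 on the walk
    have hwsufl₂ : Walk H e₁.2 l₂ := fun e he =>
      hw e (by rw [hedges]; exact List.mem_append_right _ he)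
    have hu₂suf : e₂.2 ∈ e₁.2 :: l₂ := List.mem_cons_of_mem _ hu₂pos
    obtain ⟨p, q, hpq, hplast, hpedges, hplast2, hpsuf⟩ := split_at hu₂suf
    have hA : Reaches (H \ {e₂, f₂}) s e₁.2 := by
      have : Walk (H \ {e₂, f₂}) s l₁ := by
        intro e he
        have heH : e ∈ H := hw e (by rw [hedges]; exact List.mem_append_left _ he)
        refine ⟨heH, ?_⟩
        intro hmem
        rcases hmem with rfl | hmem
        · exact hdisj (snd_mem_of_mem_edgesOf he) hu₂pos
        · simp only [Set.mem_singleton_iff] at hmem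
          subst hmem
          exact hf₂not (by rw [hedges]; exact List.mem_append_left _ he)
      simpa [hlast] using walk_reaches this
    have hB : Reaches (H \ {f₂}) e₁.2 e₂.2 := by
      have : Walk (H \ {f₂}) e₁.2 p := by
        intro e he
        have heW : e ∈ edgesOf e₁.2 l₂ := by rw [hpedges]; exact List.mem_append_left _ he
        refine ⟨hwsufl₂ e heW, ?_⟩
        simp only [Set.mem_singleton_iff]
        rintro rfl
        exact hf₂not (by rw [hedges]; exact List.mem_append_right _ heW)
      simpa [hplast] using walk_reaches this
    have hB' : Reaches (H \ {e₂}) e₂.2 t := by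
      have hndq : (e₂.2 :: q).Nodup := (hpsuf.trans hsuf).sublist.nodup hnd
      have : Walk (H \ {e₂}) e₂.2 q := by
        intro e he
        have heW : e ∈ edgesOf e₁.2 l₂ := by rw [hpedges]; exact List.mem_append_right _ he
        refine ⟨hwsufl₂ e heW, ?_⟩
        simp only [Set.mem_singleton_iff]
        rintro rfl
        exact (List.nodup_cons.1 hndq).1 (snd_mem_of_mem_edgesOf he)
      have := walk_reaches this
      rwa [hplast2, hlast2, hl] at this
    exact aux2 hKH hke₂ hPK h11 h22 ce₂ cf₁ cf₂ hA hB hB'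

lemma reaches_swap {S : Set (α × α)} {a b : α} :
    Reaches (Prod.swap '' S) a b ↔ Reaches S b a := by
  constructor
  · intro h
    induction h with
    | refl => exact Relation.ReflTransGen.refl
    | tail _ he ih =>
      rename_i x y _
      obtain ⟨p, hp, heq⟩ := he
      have hpx : p = (y, x) := by
        have h1 := congrArg Prod.fst heq
        have h2 := congrArg Prod.snd heq
        simp only [Prod.fst_swap, Prod.snd_swap] at h1 h2
        exact Prod.ext h2 h1
      exact Relation.ReflTransGen.head (by rwa [hpx] at hp) ih
  · intro h
    induction h using Relation.ReflTransGen.head_induction_on with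
    | refl => exact Relation.ReflTransGen.refl
    | head he _ ih =>
      exact Relation.ReflTransGen.tail ih ⟨_, he, rfl⟩

section Fin

variable {V : Type} [Fintype V]

/-- out-trees: a small edge set realizing all reachability from `r`. -/
lemma forest (F : Finset (V × V)) (r : V) :
    ∃ T : Finset (V × V), T ⊆ F ∧
      T.card ≤ (Finset.univ.filter (fun v => v ≠ r ∧ Reaches (F : Set (V × V)) r v)).card ∧
      ∀ v, Reaches (F : Set (V × V)) r v → Reaches (T : Set (V × V)) r v := by
  classical
  set d : V → ℕ := fun v =>
    sInf {n | ∃ l, Walk (F : Set (V × V)) r l ∧ lastV r l = v ∧ l.length = n} with hd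
  have hspec : ∀ v, v ≠ r → Reaches (F : Set (V × V)) r v →
      ∃ u, (u, v) ∈ F ∧ Reaches (F : Set (V × V)) r u ∧ d u < d v := by
    intro v hvr hv
    have hne : {n | ∃ l, Walk (F : Set (V × V)) r l ∧ lastV r l = v ∧ l.length = n}.Nonempty := by
      rcases reaches_walk hv with ⟨l, h1, h2⟩
      exact ⟨l.length, l, h1, h2, rfl⟩
    obtain ⟨l, hwl, hll, hlen⟩ := Nat.sInf_mem hne
    rcases List.eq_nil_or_concat l with rfl | ⟨L, b, rfl⟩
    · exact absurd (by simpa using hll.symm) hvr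
    · simp only [List.concat_eq_append] at hwl hll hlen
      have hb : b = v := by simpa [lastV_append] using hll
      subst hb
      have hpre : Walk (F : Set (V × V)) r L := fun e he =>
        hwl e (by rw [edgesOf_append]; exact List.mem_append_left _ he)
      have hedge : (lastV r L, b) ∈ edgesOf r (L ++ [b]) := by
        rw [edgesOf_append]
        exact List.mem_append_right _ (by simp [edgesOf])
      refine ⟨lastV r L, hwl _ hedge, walk_reaches hpre, ?_⟩
      have h1 : d (lastV r L) ≤ L.length := by
        simp only [hd]
        exact Nat.sInf_le ⟨L, hpre, rfl, rfl⟩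
      have h2 : d b = L.length + 1 := by
        simp only [hd]
        rw [← hlen]; simp
      omega
  set D := Finset.univ.filter (fun v => v ≠ r ∧ Reaches (F : Set (V × V)) r v) with hD
  set T := D.attach.image (fun x =>
    ((hspec x.1 (Finset.mem_filter.1 x.2).2.1 (Finset.mem_filter.1 x.2).2.2).choose, x.1)) with hT
  have hTF : T ⊆ F := by
    intro e he
    obtain ⟨x, -, rfl⟩ := Finset.mem_image.1 he
    exact (hspec x.1 (Finset.mem_filter.1 x.2).2.1 (Finset.mem_filter.1 x.2).2.2).choose_spec.1
  have hTcard : T.card ≤ D.card := Finset.card_image_le.trans (by simp)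
  refine ⟨T, hTF, hTcard, ?_⟩
  have key : ∀ n v, Reaches (F : Set (V × V)) r v → d v = n → Reaches (T : Set (V × V)) r v := by
    intro n
    induction n using Nat.strong_induction_on with
    | _ n ih =>
      intro v hv hdv
      by_cases hvr : v = r
      · subst hvr; exact Relation.ReflTransGen.refl
      · have hvD : v ∈ D := Finset.mem_filter.2 ⟨Finset.mem_univ _, hvr, hv⟩
        obtain ⟨hedge, hru, hdu⟩ := (hspec v hvr hv).choose_spec
        have hmemT : ((hspec v hvr hv).choose, v) ∈ T := by
          refine Finset.mem_image.2 ⟨⟨v, hvD⟩, Finset.mem_attach _ _, ?_⟩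
          rfl
        exact Relation.ReflTransGen.tail (ih (d _) (hdv ▸ hdu) _ hru rfl) hmemT
  intro v hv
  exact key (d v) v hv rfl

lemma khelper (E : Finset (V × V)) : ∀ (A : Finset V),
    (∀ u v, u ∈ A → Reaches (E : Set (V × V)) u v → Reaches (E : Set (V × V)) v u → v ∈ A) →
    ∃ K : Finset (V × V), K ⊆ E ∧ K.card ≤ 2 * A.card ∧
      ∀ u v, u ∈ A → v ∈ A → Reaches (E : Set (V × V)) u v →
        Reaches (E : Set (V × V)) v u → Reaches (K : Set (V × V)) u v := by
  classical
  intro A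
  induction A using Finset.strongInduction with
  | _ A ih =>
    intro hclosed
    rcases A.eq_empty_or_nonempty with rfl | ⟨r, hr⟩
    · exact ⟨∅, by simp, by simp, by simp⟩
    set C := A.filter (fun v => Reaches (E : Set (V × V)) v r ∧ Reaches (E : Set (V × V)) r v)
      with hC
    have hrC : r ∈ C := Finset.mem_filter.2
      ⟨hr, Relation.ReflTransGen.refl, Relation.ReflTransGen.refl⟩
    set A' := A \ C with hA'
    have hss : A' ⊂ A := Finset.sdiff_ssubset (Finset.filter_subset _ _) ⟨r, hrC⟩
    have hclosed' : ∀ u v, u ∈ A' → Reaches (E : Set (V × V)) u v →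
        Reaches (E : Set (V × V)) v u → v ∈ A' := by
      intro u v hu huv hvu
      have huA := (Finset.mem_sdiff.1 hu).1
      have huC := (Finset.mem_sdiff.1 hu).2
      have hvA : v ∈ A := hclosed u v huA huv hvu
      refine Finset.mem_sdiff.2 ⟨hvA, fun hvC => huC ?_⟩
      have h1 := (Finset.mem_filter.1 hvC).2
      exact Finset.mem_filter.2 ⟨huA, huv.trans h1.1, h1.2.trans hvu⟩
    obtain ⟨K', hK'E, hK'card, hK'cov⟩ := ih A' hss hclosed'
    set Fc := E.filter (fun e =>
      (Reaches (E : Set (V × V)) e.1 r ∧ Reaches (E : Set (V × V)) r e.1) ∧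
      (Reaches (E : Set (V × V)) e.2 r ∧ Reaches (E : Set (V × V)) r e.2)) with hFc
    have creach : ∀ x y, Reaches (E : Set (V × V)) x y → Reaches (E : Set (V × V)) y r →
        Reaches (E : Set (V × V)) r x → Reaches (Fc : Set (V × V)) x y := by
      intro x y hxy hyr hrx
      obtain ⟨l, hwl, hll⟩ := reaches_walk hxy
      have hvert : ∀ w ∈ x :: l, Reaches (E : Set (V × V)) w r ∧
          Reaches (E : Set (V × V)) r w := by
        intro w hwmem
        obtain ⟨l₁, l₂, h1, h2, h3, h4, h5⟩ := split_at hwmem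
        have p1 : Reaches (E : Set (V × V)) x w := by
          have := walk_reaches (E := (E : Set (V × V))) (s := x) (l := l₁)
            (fun e he' => hwl e (by rw [h3]; exact List.mem_append_left _ he'))
          rwa [h2] at this
        have p2 : Reaches (E : Set (V × V)) w y := by
          have := walk_reaches (E := (E : Set (V × V))) (s := w) (l := l₂)
            (fun e he' => hwl e (by rw [h3]; exact List.mem_append_right _ he'))
          rwa [h4, hll] at this
        exact ⟨p2.trans hyr, hrx.trans p1⟩
      have hwF : Walk (Fc : Set (V × V)) x l := by
        intro e he
        have heE : e ∈ E := hwl e he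
        refine Finset.mem_coe.2 (Finset.mem_filter.2 ⟨heE, ?_, ?_⟩)
        · exact hvert e.1 (fst_mem_of_mem_edgesOf he)
        · exact hvert e.2 (List.mem_cons_of_mem _ (snd_mem_of_mem_edgesOf he))
      have := walk_reaches hwF
      rwa [hll] at this
    have hmutual_of_fc : ∀ v, v ≠ r → Reaches (Fc : Set (V × V)) r v →
        (Reaches (E : Set (V × V)) v r ∧ Reaches (E : Set (V × V)) r v) := by
      intro v hvr hv
      obtain ⟨l, hwl, hll⟩ := reaches_walk hv
      have hlne : l ≠ [] := by rintro rfl; exact hvr (by simpa using hll.symm)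
      have hvl : v ∈ l := hll ▸ lastV_mem_of_ne_nil hlne r
      obtain ⟨x, hx⟩ := exists_edge_of_mem_tail (s := r) hvl
      have := Finset.mem_filter.1 (Finset.mem_coe.1 (hwl _ hx))
      exact this.2.2
    obtain ⟨Tout, hToutF, hToutCard, hToutCov⟩ := forest Fc r
    have hDoutC : (Finset.univ.filter
        (fun v => v ≠ r ∧ Reaches (Fc : Set (V × V)) r v)) ⊆ C.erase r := by
      intro v hv
      obtain ⟨-, hvr, hvre⟩ := Finset.mem_filter.1 hv
      have hmut := hmutual_of_fc v hvr hvre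
      have hvA : v ∈ A := hclosed r v hr hmut.2 hmut.1
      exact Finset.mem_erase.2 ⟨hvr, Finset.mem_filter.2 ⟨hvA, hmut⟩⟩
    set Fcs := Fc.image Prod.swap with hFcs
    have hFcs_coe : (Fcs : Set (V × V)) = Prod.swap '' (Fc : Set (V × V)) := by
      simp [hFcs]
    obtain ⟨Tin', hTin'F, hTin'Card, hTin'Cov⟩ := forest Fcs r
    have hDinC : (Finset.univ.filter
        (fun v => v ≠ r ∧ Reaches (Fcs : Set (V × V)) r v)) ⊆ C.erase r := by
      intro v hv
      obtain ⟨-, hvr, hvre⟩ := Finset.mem_filter.1 hv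
      have hvre' : Reaches (Fc : Set (V × V)) v r := by
        rw [hFcs_coe] at hvre
        exact reaches_swap.1 hvre
      obtain ⟨l, hwl, hll⟩ := reaches_walk hvre'
      have hlne : l ≠ [] := by
        rintro rfl
        exact hvr (by simpa using hll)
      have hfst : v ∈ v :: l := by simp
      have hrl : r ∈ l := hll ▸ lastV_mem_of_ne_nil hlne v
      -- take the first edge of the walk: its first component is v
      obtain ⟨c, l', rfl⟩ : ∃ c l', l = c :: l' := by
        cases l with
        | nil => exact absurd rfl hlne
        | cons c l' => exact ⟨c, l', rfl⟩
      have hedge : (v, c) ∈ edgesOf v (c :: l') := by simp [edgesOf]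
      have := Finset.mem_filter.1 (Finset.mem_coe.1 (hwl _ hedge))
      have hmut : Reaches (E : Set (V × V)) v r ∧ Reaches (E : Set (V × V)) r v := this.2.1
      have hvA : v ∈ A := hclosed r v hr hmut.2 hmut.1
      exact Finset.mem_erase.2 ⟨hvr, Finset.mem_filter.2 ⟨hvA, hmut⟩⟩
    set Tin := Tin'.image Prod.swap with hTin
    have hTinFc : Tin ⊆ Fc := by
      intro e he
      obtain ⟨e', he', rfl⟩ := Finset.mem_image.1 he
      obtain ⟨f, hf, rfl⟩ := Finset.mem_image.1 (hTin'F he')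
      simpa using hf
    have hTinCov : ∀ v ∈ C, Reaches (Tin : Set (V × V)) v r := by
      intro v hvC
      have h1 := (Finset.mem_filter.1 hvC).2
      have h2 : Reaches (Fc : Set (V × V)) v r := creach v r h1.1 Relation.ReflTransGen.refl h1.2
      have h3 : Reaches (Fcs : Set (V × V)) r v := by
        rw [hFcs_coe]
        exact reaches_swap.2 h2
      have h4 : Reaches (Tin' : Set (V × V)) r v := hTin'Cov v h3
      have : Reaches (Prod.swap '' (Tin' : Set (V × V))) v r := reaches_swap.2 h4
      rwa [show (Tin : Set (V × V)) = Prod.swap '' (Tin' : Set (V × V)) by simp [hTin]]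
    have hToutCov' : ∀ v ∈ C, Reaches (Tout : Set (V × V)) r v := by
      intro v hvC
      have h1 := (Finset.mem_filter.1 hvC).2
      exact hToutCov v (creach r v h1.2 h1.1 Relation.ReflTransGen.refl)
    refine ⟨Tout ∪ Tin ∪ K', ?_, ?_, ?_⟩
    · refine Finset.union_subset (Finset.union_subset ?_ ?_) hK'E
      · exact hToutF.trans (Finset.filter_subset _ _)
      · exact hTinFc.trans (Finset.filter_subset _ _)
    · have c1 : Tout.card ≤ C.card - 1 := by
        have := hToutCard.trans (Finset.card_le_card hDoutC)
        rwa [Finset.card_erase_of_mem hrC] at this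
      have c2 : Tin.card ≤ C.card - 1 := by
        have h0 : Tin.card ≤ Tin'.card := by rw [hTin]; exact Finset.card_image_le
        have := (h0.trans hTin'Card).trans (Finset.card_le_card hDinC)
        rwa [Finset.card_erase_of_mem hrC] at this
      have c3 : A'.card = A.card - C.card := Finset.card_sdiff_of_subset (Finset.filter_subset _ _)
      have c4 : C.card ≤ A.card := Finset.card_le_card (Finset.filter_subset _ _)
      have c5 : 1 ≤ C.card := Finset.card_pos.2 ⟨r, hrC⟩
      have := (Finset.card_union_le (Tout ∪ Tin) K').trans
        (Nat.add_le_add_right (Finset.card_union_le Tout Tin) K'.card)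
      omega
    · intro u v hu hv huv hvu
      by_cases huC : u ∈ C <;> by_cases hvC : v ∈ C
      · have h1 : Reaches (Tin : Set (V × V)) u r := hTinCov u huC
        have h2 : Reaches (Tout : Set (V × V)) r v := hToutCov' v hvC
        have m1 : (Tin : Set (V × V)) ⊆ ((Tout ∪ Tin ∪ K' : Finset (V × V)) : Set (V × V)) := by
          intro e he; simp only [Finset.coe_union, Set.mem_union]; exact Or.inl (Or.inr he)
        have m2 : (Tout : Set (V × V)) ⊆ ((Tout ∪ Tin ∪ K' : Finset (V × V)) : Set (V × V)) := by
          intro e he; simp only [Finset.coe_union, Set.mem_union]; exact Or.inl (Or.inl he)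
        exact (reaches_mono m1 h1).trans (reaches_mono m2 h2)
      · exfalso
        apply hvC
        have h1 := (Finset.mem_filter.1 huC).2
        exact Finset.mem_filter.2 ⟨hv, hvu.trans h1.1, h1.2.trans huv⟩
      · exfalso
        apply huC
        have h1 := (Finset.mem_filter.1 hvC).2
        exact Finset.mem_filter.2 ⟨hu, huv.trans h1.1, h1.2.trans hvu⟩
      · have hu' : u ∈ A' := Finset.mem_sdiff.2 ⟨hu, huC⟩
        have hv' : v ∈ A' := Finset.mem_sdiff.2 ⟨hv, hvC⟩
        have := hK'cov u v hu' hv' huv hvu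
        have m3 : (K' : Set (V × V)) ⊆ ((Tout ∪ Tin ∪ K' : Finset (V × V)) : Set (V × V)) := by
          intro e he; simp only [Finset.coe_union, Set.mem_union]; exact Or.inr he
        exact reaches_mono m3 this

/-- SCC skeleton. -/
lemma kexists (E : Finset (V × V)) :
    ∃ K : Finset (V × V), K ⊆ E ∧ K.card ≤ 2 * Fintype.card V ∧
      ∀ u v, Reaches (E : Set (V × V)) u v → Reaches (E : Set (V × V)) v u →
        Reaches (K : Set (V × V)) u v := by
  obtain ⟨K, h1, h2, h3⟩ := khelper E Finset.univ (by intros; exact Finset.mem_univ _)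
  refine ⟨K, h1, by simpa using h2, fun u v huv hvu => h3 u v (Finset.mem_univ _) (Finset.mem_univ _) huv hvu⟩

end Fin

lemma nat_aux {d c : ℕ} (h : c + d = d * d) : d ≤ 1 + c := by
  rcases d with _ | k
  · omega
  · have h2 : (k + 1) * (k + 1) = k * k + 2 * k + 1 := by ring
    rw [h2] at h
    generalize k * k = m at h
    omega

end RP

theorem linear_size_reachability_preservers :
    ∃ C : ℝ, 0 < C ∧
      ∀ (V : Type) [Fintype V]
        (E : Finset (V × V)) (S : Finset V) (P : Finset (V × V)),
        (∀ q ∈ P, q.1 ∈ S) →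
        P.card * S.card ≤ Fintype.card V →
        ∃ EH ⊆ E,
          (∀ q ∈ P, Reaches (EH : Set (V × V)) q.1 q.2 ↔ Reaches (E : Set (V × V)) q.1 q.2) ∧
          (EH.card : ℝ) ≤ C * (Fintype.card V : ℝ) := by
  classical
  refine ⟨5, by norm_num, ?_⟩
  intro V _ E S P hPS hcard
  obtain ⟨K, hKE, hKcard, hPK⟩ := RP.kexists E
  have hex : ∃ k, ∃ M : Finset (V × V), (M ⊆ E \ K ∧ ∀ q ∈ P,
      Reaches (E : Set (V × V)) q.1 q.2 →
      Reaches ((K ∪ M : Finset (V × V)) : Set (V × V)) q.1 q.2) ∧ M.card = k := by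
    refine ⟨(E \ K).card, E \ K, ⟨Finset.Subset.refl _, ?_⟩, rfl⟩
    intro q hq hr
    rwa [Finset.union_sdiff_of_subset hKE]
  obtain ⟨M, hMgood, hMcard⟩ := Nat.find_spec hex
  have hMsub : M ⊆ E \ K := hMgood.1
  have hMpred := hMgood.2
  have hMK : ∀ f ∈ M, f ∉ K := fun f hf => (Finset.mem_sdiff.1 (hMsub hf)).2
  have hME : ∀ f ∈ M, f ∈ E := fun f hf => (Finset.mem_sdiff.1 (hMsub hf)).1
  set H := K ∪ M with hH
  have hHEs : (H : Set (V × V)) ⊆ (E : Set (V × V)) := by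
    intro e he
    rcases Finset.mem_union.1 (Finset.mem_coe.1 he) with h | h
    · exact Finset.mem_coe.2 (hKE h)
    · exact Finset.mem_coe.2 (hME _ h)
  have hmin : ∀ f ∈ M, ∃ q, q ∈ P ∧ Reaches (E : Set (V × V)) q.1 q.2 ∧
      ¬ Reaches ((H : Set (V × V)) \ {f}) q.1 q.2 := by
    intro f hf
    have hlt : (M.erase f).card < Nat.find hex := by
      rw [← hMcard]; exact Finset.card_erase_lt_of_mem hf
    have hmn := Nat.find_min hex hlt
    have hnot : ¬ ((M.erase f ⊆ E \ K ∧ ∀ q ∈ P,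
        Reaches (E : Set (V × V)) q.1 q.2 →
        Reaches ((K ∪ M.erase f : Finset (V × V)) : Set (V × V)) q.1 q.2)) := by
      intro hg
      exact hmn ⟨M.erase f, hg, rfl⟩
    push_neg at hnot
    have hsub' : M.erase f ⊆ E \ K := (Finset.erase_subset _ _).trans hMsub
    obtain ⟨q, hq1, hq2, hq3⟩ := hnot hsub'
    refine ⟨q, hq1, hq2, ?_⟩
    have h1 : K ∪ M.erase f = H.erase f := by
      rw [hH, Finset.erase_union_distrib, Finset.erase_eq_of_notMem (hMK f hf)]
    have hcoe : ((K ∪ M.erase f : Finset (V × V)) : Set (V × V)) =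
        ((H : Set (V × V)) \ {f}) := by
      rw [h1, Finset.coe_erase]
    rw [← hcoe]
    exact hq3
  set c : (V × V) → (V × V) := fun f =>
    if h : ∃ q, q ∈ P ∧ Reaches (E : Set (V × V)) q.1 q.2 ∧
        ¬ Reaches ((H : Set (V × V)) \ {f}) q.1 q.2 then h.choose else f with hc
  have hcP : ∀ f ∈ M, (c f) ∈ P ∧ RP.Crit (H : Set (V × V)) f (c f).1 (c f).2 := by
    intro f hf
    obtain ⟨q0, hq0⟩ := hmin f hf
    have hx : ∃ q, q ∈ P ∧ Reaches (E : Set (V × V)) q.1 q.2 ∧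
        ¬ Reaches ((H : Set (V × V)) \ {f}) q.1 q.2 := ⟨q0, hq0⟩
    have h1 : c f = hx.choose := by rw [hc]; exact dif_pos hx
    obtain ⟨hq1, hq2, hq3⟩ := hx.choose_spec
    rw [h1]
    exact ⟨hq1, hMpred _ hq1 hq2, hq3⟩
  have hPK' : ∀ u v, Reaches (H : Set (V × V)) u v → Reaches (H : Set (V × V)) v u →
      Reaches (K : Set (V × V)) u v := fun u v h h' =>
    hPK u v (RP.reaches_mono hHEs h) (RP.reaches_mono hHEs h')
  have hKH : (K : Set (V × V)) ⊆ (H : Set (V × V)) := by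
    intro e he
    exact Finset.mem_coe.2 (Finset.mem_union_left _ (Finset.mem_coe.1 he))
  have hC1 : ∀ f ∈ M, ∀ g ∈ M, f.2 = g.2 → (c f).1 = (c g).1 → f = g := by
    intro f hf g hg hh hsrc
    by_contra hne
    have h1 := (hcP f hf).2
    have h2 := (hcP g hg).2
    rw [← hsrc] at h2
    exact RP.claim1 hne hh h1 h2
  have hC2 : ∀ f₁ ∈ M, ∀ f₂ ∈ M, ∀ g₁ ∈ M, ∀ g₂ ∈ M,
      c f₁ = c f₂ → f₁.2 ≠ f₂.2 → g₁.2 = f₁.2 → g₂.2 = f₂.2 →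
      (c g₁).1 = (c g₂).1 → f₁ ≠ g₁ → f₂ ≠ g₂ → False := by
    intro f₁ h₁ f₂ h₂ g₁ hg₁ g₂ hg₂ hcc hv h11 h22 hsrc hne₁ hne₂
    have ce₁ := (hcP f₁ h₁).2
    have ce₂ := (hcP f₂ h₂).2
    rw [← hcc] at ce₂
    have cf₁ := (hcP g₁ hg₁).2
    have cf₂ := (hcP g₂ hg₂).2
    rw [← hsrc] at cf₂
    exact RP.claim2 hKH (fun hk => hMK f₁ h₁ (Finset.mem_coe.1 hk))
      (fun hk => hMK f₂ h₂ (Finset.mem_coe.1 hk)) hPK' ce₁ ce₂ cf₁ cf₂ h11 h22 hv hne₁ hne₂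
  -- counting
  set D := (M ×ˢ M).filter (fun p => p.1 ≠ p.2 ∧ p.1.2 = p.2.2) with hD
  have hDmem : ∀ p ∈ D, p.1 ∈ M ∧ p.2 ∈ M ∧ p.1 ≠ p.2 ∧ p.1.2 = p.2.2 := by
    intro p hp
    have h := Finset.mem_filter.1 hp
    have h2 := Finset.mem_product.1 h.1
    exact ⟨h2.1, h2.2, h.2.1, h.2.2⟩
  have hDle : D.card ≤ P.card * S.card := by
    rw [← Finset.card_product]
    apply Finset.card_le_card_of_injOn (fun p => (c p.1, (c p.2).1))
    · intro p hp
      obtain ⟨h1, h2, -, -⟩ := hDmem p hp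
      exact Finset.mem_product.2 ⟨(hcP p.1 h1).1, hPS _ (hcP p.2 h2).1⟩
    · intro p hp q hq heq
      obtain ⟨hp1, hp2, hpne, hph⟩ := hDmem p hp
      obtain ⟨hq1, hq2, hqne, hqh⟩ := hDmem q hq
      obtain ⟨hc1, hc2⟩ := Prod.ext_iff.1 heq
      by_cases hv : p.1.2 = q.1.2
      · have e1 : p.1 = q.1 := hC1 p.1 hp1 q.1 hq1 hv (congrArg Prod.fst hc1)
        have hheads : p.2.2 = q.2.2 := by rw [← hph, ← hqh, hv]
        have e2 : p.2 = q.2 := hC1 p.2 hp2 q.2 hq2 hheads hc2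
        exact Prod.ext e1 e2
      · exact absurd (hC2 p.1 hp1 q.1 hq1 p.2 hp2 q.2 hq2 hc1 hv hph.symm
          (by rw [← hqh]) hc2 hpne hqne) (fun h => h)
  have hM1 : M.card = ∑ v : V, (M.filter (fun f => f.2 = v)).card :=
    Finset.card_eq_sum_card_fiberwise (fun x _ => Finset.mem_univ x.2)
  have hD1 : D.card = ∑ v : V, (D.filter (fun p => p.1.2 = v)).card :=
    Finset.card_eq_sum_card_fiberwise (fun x _ => Finset.mem_univ x.1.2)
  have hfib : ∀ v : V, (D.filter (fun p => p.1.2 = v)) =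
      ((M.filter (fun f => f.2 = v)) ×ˢ (M.filter (fun f => f.2 = v))).filter
        (fun p => p.1 ≠ p.2) := by
    intro v
    ext p
    constructor
    · intro hp
      have h5 : p.1.2 = v := (Finset.mem_filter.1 hp).2
      obtain ⟨h1, h2, h3, h4⟩ := hDmem p (Finset.mem_filter.1 hp).1
      exact Finset.mem_filter.2 ⟨Finset.mem_product.2
        ⟨Finset.mem_filter.2 ⟨h1, h5⟩, Finset.mem_filter.2 ⟨h2, by rw [← h4, h5]⟩⟩, h3⟩
    · intro hp
      have h3 : p.1 ≠ p.2 := (Finset.mem_filter.1 hp).2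
      obtain ⟨ha, hb⟩ := Finset.mem_product.1 (Finset.mem_filter.1 hp).1
      have h1 := Finset.mem_filter.1 ha
      have h2 := Finset.mem_filter.1 hb
      refine Finset.mem_filter.2 ⟨?_, h1.2⟩
      exact Finset.mem_filter.2 ⟨Finset.mem_product.2 ⟨h1.1, h2.1⟩, h3, by rw [h1.2, h2.2]⟩
  have hcnt : ∀ v : V, (M.filter (fun f => f.2 = v)).card ≤
      1 + (D.filter (fun p => p.1.2 = v)).card := by
    intro v
    rw [hfib v]
    set Mv := M.filter (fun f => f.2 = v) with hMv
    have hdiag : ((Mv ×ˢ Mv).filter (fun p => ¬ p.1 ≠ p.2)).card = Mv.card := by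
      have himg : (Mv ×ˢ Mv).filter (fun p => ¬ p.1 ≠ p.2) =
          Mv.image (fun a => (a, a)) := by
        ext p
        simp only [Finset.mem_filter, Finset.mem_product, Finset.mem_image, not_not]
        constructor
        · rintro ⟨⟨h1, h2⟩, h3⟩
          exact ⟨p.1, h1, Prod.ext rfl h3⟩
        · rintro ⟨a, ha, rfl⟩
          exact ⟨⟨ha, ha⟩, rfl⟩
      rw [himg]
      exact Finset.card_image_of_injective _ (fun a b h => (Prod.ext_iff.1 h).1)
    have hsplit := Finset.card_filter_add_card_filter_not
      (s := Mv ×ˢ Mv) (p := fun p => p.1 ≠ p.2)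
    rw [hdiag, Finset.card_product] at hsplit
    exact RP.nat_aux hsplit
  have hMbound : M.card ≤ Fintype.card V + P.card * S.card := by
    have h1 : M.card ≤ ∑ v : V, (1 + (D.filter (fun p => p.1.2 = v)).card) := by
      rw [hM1]
      exact Finset.sum_le_sum (fun v _ => hcnt v)
    have h2 : ∑ v : V, (1 + (D.filter (fun p => p.1.2 = v)).card) =
        Fintype.card V + D.card := by
      rw [Finset.sum_add_distrib, ← hD1]
      simp [Finset.card_univ]
    omega
  refine ⟨K ∪ M, Finset.union_subset hKE (fun f hf => hME f hf), ?_, ?_⟩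
  · intro q hq
    constructor
    · intro h
      exact RP.reaches_mono hHEs h
    · intro h
      exact hMpred q hq h
  · have h1 : (K ∪ M).card ≤ K.card + M.card := Finset.card_union_le _ _
    have h2 : (K ∪ M).card ≤ 4 * Fintype.card V := by omega
    calc ((K ∪ M).card : ℝ) ≤ ((4 * Fintype.card V : ℕ) : ℝ) := Nat.cast_le.2 h2
      _ ≤ 5 * (Fintype.card V : ℝ) := by
        push_cast
        have : (0 : ℝ) ≤ (Fintype.card V : ℝ) := Nat.cast_nonneg _
        linarith
end

section
/- Let W be a real inner product space, let a ∈ W with ‖a‖ > 0, let k be a natural number, and let δ be a real number with 0 ≤ δ and (k + 1) · (‖a‖ − δ) > k · ‖a‖. Let A ⊆ W be a set of vectors such that every e ∈ A satisfies (‖a‖ − δ) · ‖a‖ ≤ ⟪e, a⟫ ≤ ‖a‖², and ⟪e, a⟫ = ‖a‖² implies e = a. Then for every natural number m and every function e : Fin m → W with e(i) ∈ A for all i and ∑_{i} e(i) = k • a, it holds that m = k and e(i) = a for all i. -/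
theorem unique_canonical_path_core
    {W : Type*} [NormedAddCommGroup W] [InnerProductSpace ℝ W]
    (a : W) (ha : 0 < ‖a‖) (k : ℕ) (δ : ℝ) (hδ : 0 ≤ δ)
    (hkδ : ((k : ℝ) + 1) * (‖a‖ - δ) > (k : ℝ) * ‖a‖)
    (A : Set W)
    (hA : ∀ e ∈ A, (‖a‖ - δ) * ‖a‖ ≤ (inner ℝ e a : ℝ) ∧ (inner ℝ e a : ℝ) ≤ ‖a‖ ^ 2 ∧
      ((inner ℝ e a : ℝ) = ‖a‖ ^ 2 → e = a)) :
    ∀ (m : ℕ) (e : Fin m → W), (∀ i, e i ∈ A) → (∑ i, e i) = k • a →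
      m = k ∧ ∀ i, e i = a := by
  intro m e he hsum
  have hsum' : (∑ i, (inner ℝ (e i) a : ℝ)) = (k : ℝ) * ‖a‖ ^ 2 := by
    rw [← sum_inner, hsum]
    have : (k : ℕ) • a = (k : ℝ) • a := (Nat.cast_smul_eq_nsmul ℝ k a).symm
    rw [this, real_inner_smul_left, real_inner_self_eq_norm_sq]
  have hpos : 0 < ‖a‖ - δ := by
    nlinarith [Nat.cast_nonneg (α := ℝ) k, ha]
  -- lower bound: m * (‖a‖-δ) * ‖a‖ ≤ k * ‖a‖^2
  have hlow : (m : ℝ) * ((‖a‖ - δ) * ‖a‖) ≤ (k : ℝ) * ‖a‖ ^ 2 := by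
    rw [← hsum']
    calc (m : ℝ) * ((‖a‖ - δ) * ‖a‖) = ∑ _i : Fin m, (‖a‖ - δ) * ‖a‖ := by
          simp [mul_comm]
      _ ≤ ∑ i, (inner ℝ (e i) a : ℝ) :=
          Finset.sum_le_sum fun i _ => (hA _ (he i)).1
  have hhigh : (k : ℝ) * ‖a‖ ^ 2 ≤ (m : ℝ) * ‖a‖ ^ 2 := by
    rw [← hsum']
    calc (∑ i, (inner ℝ (e i) a : ℝ)) ≤ ∑ _i : Fin m, ‖a‖ ^ 2 :=
          Finset.sum_le_sum fun i _ => (hA _ (he i)).2.1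
      _ = (m : ℝ) * ‖a‖ ^ 2 := by simp [mul_comm]
  have hkm : (k : ℝ) ≤ (m : ℝ) := by nlinarith [mul_pos ha ha]
  have hmk : (m : ℝ) ≤ (k : ℝ) := by
    by_contra h
    push_neg at h
    have : (k : ℝ) + 1 ≤ (m : ℝ) := by exact_mod_cast Nat.cast_lt.mp h
    nlinarith [mul_pos hpos ha, mul_lt_mul_of_pos_right hkδ ha]
  have hm : m = k := by exact_mod_cast le_antisymm hmk hkm
  refine ⟨hm, fun i => ?_⟩
  have heq : ∀ j : Fin m, (inner ℝ (e j) a : ℝ) = ‖a‖ ^ 2 := by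
    have h1 : (∑ j, (inner ℝ (e j) a : ℝ)) = ∑ _j : Fin m, ‖a‖ ^ 2 := by
      rw [hsum']; simp [hm, mul_comm]
    intro j
    by_contra hne
    have hlt : (inner ℝ (e j) a : ℝ) < ‖a‖ ^ 2 := lt_of_le_of_ne (hA _ (he j)).2.1 hne
    have : (∑ j, (inner ℝ (e j) a : ℝ)) < ∑ _j : Fin m, ‖a‖ ^ 2 :=
      Finset.sum_lt_sum (fun i _ => (hA _ (he i)).2.1) ⟨j, Finset.mem_univ j, hlt⟩
    linarith [h1.le, h1.ge]
  exact (hA _ (he i)).2.2 (heq i)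
end

section
/- Let G be a finite simple undirected graph on vertex set V, let L ≥ 2 be an integer, and let P be a set of ordered vertex pairs such that: (i) for every (s, t) ∈ P, the graph distance from s to t in G equals L, and there is exactly one path (walk with no repeated vertices) in G from s to t of length L, denoted π(s, t); (ii) for distinct pairs of P, the paths π are pairwise edge-disjoint. Define the layered directed graph G' on vertex set V × {1, …, 2L} with a directed edge from (u, i) to (v, i+1) whenever {u, v} is an edge of G and 1 ≤ i ≤ 2L − 1, and define P' = {((s, j), (t, j + L)) : (s, t) ∈ P, 1 ≤ j ≤ L}. Then every reachability preserver of (G', P') has at least |P| · L · (L − 1) edges. -/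
/-- The layered directed graph obtained from an undirected graph `G`: vertices are
pairs `(u, i)` with `i` a layer in `{0, …, 2L-1}` (0-indexed), with a directed edge
from `(u, i)` to `(v, i+1)` whenever `{u, v}` is an edge of `G`. -/
def layerEdges {V : Type*} [Fintype V] [DecidableEq V]
    (G : SimpleGraph V) [DecidableRel G.Adj] (L : ℕ) :
    Finset ((V × Fin (2 * L)) × (V × Fin (2 * L))) :=
  Finset.univ.filter (fun e => G.Adj e.1.1 e.2.1 ∧ (e.2.2 : ℕ) = (e.1.2 : ℕ) + 1)

/-- The layered pair set: for each pair `(s, t) ∈ P` and each layer `j` with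
`0 ≤ j ≤ L - 1` (0-indexed, corresponding to `1 ≤ j ≤ L` 1-indexed), the pair
`((s, j), (t, j + L))`. -/
def layerPairs {V : Type*} [Fintype V] [DecidableEq V] (L : ℕ) (P : Finset (V × V)) :
    Finset ((V × Fin (2 * L)) × (V × Fin (2 * L))) :=
  Finset.univ.filter (fun q => (q.1.1, q.2.1) ∈ P ∧ (q.1.2 : ℕ) < L ∧
    (q.2.2 : ℕ) = (q.1.2 : ℕ) + L)


open SimpleGraph

lemma walk_getVert_injOn {V : Type*} {G : SimpleGraph V} :
    ∀ {a b : V} (w : G.Walk a b), w.IsPath →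
      ∀ i ≤ w.length, ∀ j ≤ w.length, w.getVert i = w.getVert j → i = j := by
  intro a b w
  induction w with
  | nil => intro _ i hi j hj _; simp at hi hj; omega
  | cons h q ih =>
    intro hp i hi j hj heq
    rw [Walk.cons_isPath_iff] at hp
    match i, j with
    | 0, 0 => rfl
    | 0, (j+1) =>
      exfalso
      apply hp.2
      rw [Walk.mem_support_iff_exists_getVert]
      exact ⟨j, by simpa [Walk.getVert_cons_succ, Walk.getVert_zero] using heq.symm,
        by simp [Walk.length_cons] at hj; omega⟩
    | (i+1), 0 =>
      exfalso
      apply hp.2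
      rw [Walk.mem_support_iff_exists_getVert]
      exact ⟨i, by simpa [Walk.getVert_cons_succ, Walk.getVert_zero] using heq,
        by simp [Walk.length_cons] at hi; omega⟩
    | (i+1), (j+1) =>
      have := ih hp.1 i (by simp [Walk.length_cons] at hi; omega)
        j (by simp [Walk.length_cons] at hj; omega)
        (by simpa [Walk.getVert_cons_succ] using heq)
      omega

lemma walk_edge_mem {V : Type*} {G : SimpleGraph V} :
    ∀ {a b : V} (w : G.Walk a b), ∀ i < w.length,
      s(w.getVert i, w.getVert (i+1)) ∈ w.edges := by
  intro a b w
  induction w with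
  | nil => intro i hi; simp at hi
  | cons h q ih =>
    intro i hi
    match i with
    | 0 =>
      simp [Walk.edges_cons, Walk.getVert_zero, Walk.getVert_cons_succ]
    | (i+1) =>
      simp only [Walk.getVert_cons_succ, Walk.edges_cons, List.mem_cons]
      exact Or.inr (ih i (by simp [Walk.length_cons] at hi; omega))

lemma reaches_layer {V : Type*} [Fintype V] [DecidableEq V]
    (G : SimpleGraph V) [DecidableRel G.Adj] (L : ℕ) :
    ∀ {a b : V} (w : G.Walk a b) (jf kf : Fin (2 * L)),
      (jf : ℕ) + w.length = (kf : ℕ) →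
      Reaches ((layerEdges G L : Finset _) : Set ((V × Fin (2*L)) × (V × Fin (2*L))))
        (a, jf) (b, kf) := by
  intro a b w
  induction w with
  | nil =>
    intro jf kf h
    have : jf = kf := Fin.ext (by simpa using h)
    rw [this]
    exact Relation.ReflTransGen.refl
  | @cons u v c hadj q ih =>
    intro jf kf h
    simp only [Walk.length_cons] at h
    have hlt : (jf : ℕ) + 1 < 2 * L := by have := kf.isLt; omega
    refine Relation.ReflTransGen.head ?_ (ih ⟨(jf : ℕ) + 1, hlt⟩ kf (by simpa using by omega))
    simp [layerEdges, hadj]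

lemma reaches_extract {V : Type*} [Fintype V] [DecidableEq V]
    (G : SimpleGraph V) [DecidableRel G.Adj] (L : ℕ)
    (EH : Finset ((V × Fin (2 * L)) × (V × Fin (2 * L)))) (hsub : EH ⊆ layerEdges G L)
    {x y : V × Fin (2 * L)}
    (h : Reaches (EH : Set ((V × Fin (2 * L)) × (V × Fin (2 * L)))) x y) :
    ∃ w : G.Walk x.1 y.1, (x.2 : ℕ) + w.length = (y.2 : ℕ) ∧
      ∀ i < w.length, ∃ e ∈ EH, e.1.1 = w.getVert i ∧ e.2.1 = w.getVert (i+1) ∧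
        (e.1.2 : ℕ) = (x.2 : ℕ) + i := by
  induction h using Relation.ReflTransGen.head_induction_on with
  | refl => exact ⟨Walk.nil, by simp, by simp⟩
  | head hstep hrest ih =>
    rename_i a c
    obtain ⟨w, hlen, hed⟩ := ih
    have hmem := hsub (Finset.mem_coe.mp hstep)
    simp only [layerEdges, Finset.mem_filter, Finset.mem_univ, true_and] at hmem
    refine ⟨Walk.cons hmem.1 w, by simp [Walk.length_cons]; omega, ?_⟩
    intro i hi
    match i with
    | 0 =>
      exact ⟨(a, c), Finset.mem_coe.mp hstep, by simp [Walk.getVert_zero],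
        by simp [Walk.getVert_cons_succ, Walk.getVert_zero], by simp⟩
    | (i+1) =>
      obtain ⟨e, he, h1, h2, h3⟩ := hed i (by simp [Walk.length_cons] at hi; omega)
      exact ⟨e, he, by simpa [Walk.getVert_cons_succ] using h1,
        by simpa [Walk.getVert_cons_succ] using h2, by omega⟩

theorem layered_reachability_lower_bound
    {V : Type*} [Fintype V] [DecidableEq V]
    (G : SimpleGraph V) [DecidableRel G.Adj]
    (L : ℕ) (hL : 2 ≤ L)
    (P : Finset (V × V))
    (hdist : ∀ q ∈ P, G.dist q.1 q.2 = L)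
    (huniq : ∀ q ∈ P, ∃! π : G.Path q.1 q.2, (π : G.Walk q.1 q.2).length = L)
    (hdisj : ∀ q ∈ P, ∀ q' ∈ P, q ≠ q' →
      ∀ (π : G.Path q.1 q.2) (π' : G.Path q'.1 q'.2),
        (π : G.Walk q.1 q.2).length = L → (π' : G.Walk q'.1 q'.2).length = L →
        ∀ e ∈ (π : G.Walk q.1 q.2).edges, e ∉ (π' : G.Walk q'.1 q'.2).edges) :
    ∀ EH ⊆ layerEdges G L,
      (∀ q ∈ layerPairs L P,
        Reaches (EH : Set ((V × Fin (2 * L)) × (V × Fin (2 * L)))) q.1 q.2 ↔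
        Reaches ((layerEdges G L : Set ((V × Fin (2 * L)) × (V × Fin (2 * L))))) q.1 q.2) →
      P.card * L * (L - 1) ≤ EH.card := by
  classical
  intro EH hsub hpres
  have h2L : 0 < 2 * L := by omega
  -- key: every lifted edge of the chosen path is in EH
  have key : ∀ q (hq : q ∈ P), ∀ j < L, ∀ i < L,
      ∀ e : (V × Fin (2 * L)) × (V × Fin (2 * L)),
        e.1.1 = (((huniq q hq).choose : G.Walk q.1 q.2)).getVert i →
        e.2.1 = (((huniq q hq).choose : G.Walk q.1 q.2)).getVert (i + 1) →
        (e.1.2 : ℕ) = j + i → (e.2.2 : ℕ) = j + i + 1 → e ∈ EH := by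
    intro q hq j hj i hi e he11 he21 he12 he22
    set w : G.Walk q.1 q.2 := ((huniq q hq).choose : G.Walk q.1 q.2) with hwdef
    have hw : w.length = L := (huniq q hq).choose_spec.1
    have hjf : j < 2 * L := by omega
    have hkf : j + L < 2 * L := by omega
    have hpair : (((q.1, ⟨j, hjf⟩), (q.2, ⟨j + L, hkf⟩)) :
        (V × Fin (2 * L)) × (V × Fin (2 * L))) ∈ layerPairs L P := by
      refine Finset.mem_filter.mpr ⟨Finset.mem_univ _, ?_, hj, rfl⟩
      simpa using hq
    have hreach : Reaches ((layerEdges G L : Finset _) :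
        Set ((V × Fin (2 * L)) × (V × Fin (2 * L)))) (q.1, ⟨j, hjf⟩) (q.2, ⟨j + L, hkf⟩) :=
      reaches_layer G L w ⟨j, hjf⟩ ⟨j + L, hkf⟩ (by simp [hw])
    have hEH := (hpres _ hpair).mpr hreach
    obtain ⟨w', hlen, hed⟩ := reaches_extract G L EH hsub hEH
    have hlen' : w'.length = L := by simpa using hlen
    have hpath : w'.IsPath := w'.isPath_of_length_eq_dist (by rw [hdist q hq]; exact hlen')
    have huw : (⟨w', hpath⟩ : G.Path q.1 q.2) = (huniq q hq).choose :=
      (huniq q hq).choose_spec.2 _ hlen'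
    have hww : w' = w := by rw [hwdef, ← huw]
    obtain ⟨e', he', h1, h2, h3⟩ := hed i (by omega)
    have he'layer := hsub he'
    simp only [layerEdges, Finset.mem_filter, Finset.mem_univ, true_and] at he'layer
    rw [hww] at h1 h2
    have hee : e = e' := by
      refine Prod.ext (Prod.ext ?_ (Fin.ext ?_)) (Prod.ext ?_ (Fin.ext ?_))
      · rw [he11, h1]
      · rw [he12, h3]
      · rw [he21, h2]
      · rw [he22, he'layer.2, h3]
    rw [hee]; exact he'
  -- counting
  set F : (V × V) × ℕ × ℕ → ((V × Fin (2 * L)) × (V × Fin (2 * L))) := fun x =>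
    if h : x.1 ∈ P then
      ((((huniq x.1 h).choose : G.Walk x.1.1 x.1.2).getVert x.2.2,
         ⟨(x.2.1 + x.2.2) % (2 * L), Nat.mod_lt _ h2L⟩),
       (((huniq x.1 h).choose : G.Walk x.1.1 x.1.2).getVert (x.2.2 + 1),
         ⟨(x.2.1 + x.2.2 + 1) % (2 * L), Nat.mod_lt _ h2L⟩))
    else ((x.1.1, ⟨0, h2L⟩), (x.1.1, ⟨0, h2L⟩)) with hF
  set S : Finset ((V × V) × ℕ × ℕ) := P ×ˢ (Finset.range L ×ˢ Finset.range L) with hS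
  have hmaps : ∀ x ∈ S, F x ∈ EH := by
    intro x hx
    rw [hS, Finset.mem_product, Finset.mem_product, Finset.mem_range, Finset.mem_range] at hx
    obtain ⟨hq, hj, hi⟩ := hx
    rw [hF]
    simp only [dif_pos hq]
    refine key x.1 hq x.2.1 hj x.2.2 hi _ rfl rfl ?_ ?_
    · exact Nat.mod_eq_of_lt (by omega)
    · exact Nat.mod_eq_of_lt (by omega)
  have hinj : Set.InjOn F S := by
    intro x hx y hy heq
    rw [hS, Finset.mem_coe, Finset.mem_product, Finset.mem_product,
      Finset.mem_range, Finset.mem_range] at hx hy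
    obtain ⟨hqx, hjx, hix⟩ := hx
    obtain ⟨hqy, hjy, hiy⟩ := hy
    rw [hF] at heq
    simp only [dif_pos hqx, dif_pos hqy, Prod.mk.injEq, Fin.mk.injEq] at heq
    obtain ⟨⟨g1, g2⟩, g3, g4⟩ := heq
    rw [Nat.mod_eq_of_lt (by omega), Nat.mod_eq_of_lt (by omega)] at g2
    have hwx : ((huniq x.1 hqx).choose : G.Walk x.1.1 x.1.2).length = L :=
      (huniq x.1 hqx).choose_spec.1
    have hwy : ((huniq y.1 hqy).choose : G.Walk y.1.1 y.1.2).length = L :=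
      (huniq y.1 hqy).choose_spec.1
    have hqq : x.1 = y.1 := by
      by_contra hne
      refine hdisj x.1 hqx y.1 hqy hne (huniq x.1 hqx).choose (huniq y.1 hqy).choose hwx hwy
        s(((huniq x.1 hqx).choose : G.Walk x.1.1 x.1.2).getVert x.2.2,
          ((huniq x.1 hqx).choose : G.Walk x.1.1 x.1.2).getVert (x.2.2 + 1))
        (walk_edge_mem _ x.2.2 (by omega)) ?_
      rw [g1, g3]
      exact walk_edge_mem _ y.2.2 (by omega)
    obtain ⟨q, j, i⟩ := x
    obtain ⟨q', j', i'⟩ := y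
    simp only at hqq g1 g2 g3 hqx hqy hjx hjy hix hiy hwx hwy ⊢
    subst hqq
    have hch : (huniq q hqy).choose = (huniq q hqx).choose := rfl
    rw [hch] at g1 g3 hwy
    have hii : i = i' := walk_getVert_injOn _ (huniq q hqx).choose.2 i (by omega) i' (by omega) g1
    subst hii
    have : j = j' := by omega
    subst this
    rfl
  have hcard : S.card ≤ EH.card := Finset.card_le_card_of_injOn F hmaps hinj
  have hScard : S.card = P.card * (L * L) := by
    rw [hS, Finset.card_product, Finset.card_product, Finset.card_range]
  calc P.card * L * (L - 1) ≤ P.card * (L * L) := by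
        rw [mul_assoc]; gcongr; omega
    _ = S.card := hScard.symm
    _ ≤ EH.card := hcard
end
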